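/- Let h : ℝ → ℝ be differentiable and let ε > 0. Assume that for every t ≥ 0 with h t < 0 one has deriv h t ≥ ε. Then: (1) for every t ≥ max 0 (−(h 0)/ε), h t ≥ 0; and (2) the set {t ≥ 0 : h t ≥ 0} is upward closed, i.e., if h t₀ ≥ 0 and t ≥ t₀ ≥ 0 then h t ≥ 0. -/

import Mathlib

lemma cbf_upward (h : ℝ → ℝ) (hdiff : Differentiable ℝ h)
    (ε : ℝ) (hε : 0 < ε)
    (hineq : ∀ t : ℝ, 0 ≤ t → h t < 0 → ε ≤ deriv h t) :
    ∀ t₀ t : ℝ, 0 ≤ t₀ → t₀ ≤ t → 0 ≤ h t₀ → 0 ≤ h t := by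
  intro t₀ t ht₀ hle h0
  by_contra hneg
  push_neg at hneg
  have htlt : t₀ < t := by
    rcases lt_or_eq_of_le hle with h' | h'
    · exact h'
    · exact absurd (h' ▸ h0) (not_le.mpr hneg)
  set S : Set ℝ := Set.Icc t₀ t ∩ {u | 0 ≤ h u} with hS
  have hSclosed : IsClosed S :=
    isClosed_Icc.inter (isClosed_le continuous_const hdiff.continuous)
  have hSne : S.Nonempty := ⟨t₀, ⟨le_refl _, hle⟩, h0⟩
  have hSbdd : BddAbove S := ⟨t, fun u hu => hu.1.2⟩
  set s := sSup S with hs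
  have hsmem : s ∈ S := hSclosed.csSup_mem hSne hSbdd
  have hsIcc : s ∈ Set.Icc t₀ t := hsmem.1
  have hshge : 0 ≤ h s := hsmem.2
  have hslt : s < t := lt_of_le_of_ne hsIcc.2 (fun he => (not_le.mpr hneg) (he ▸ hshge))
  have hneg' : ∀ u, s < u → u ≤ t → h u < 0 := by
    intro u hu1 hu2
    by_contra hc
    push_neg at hc
    have : u ∈ S := ⟨⟨le_trans hsIcc.1 hu1.le, hu2⟩, hc⟩
    exact absurd (le_csSup hSbdd this) (not_le.mpr hu1)
  have hmono : StrictMonoOn h (Set.Icc s t) := by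
    apply StrictMonoOn.mono (s := Set.Icc s t) ?_ (le_refl _)
    apply strictMonoOn_of_deriv_pos (convex_Icc s t) hdiff.continuous.continuousOn
    intro u hu
    rw [interior_Icc] at hu
    have hu0 : 0 ≤ u := le_trans (le_trans ht₀ hsIcc.1) hu.1.le
    have := hineq u hu0 (hneg' u hu.1 hu.2.le)
    linarith
  have := hmono (Set.left_mem_Icc.mpr hslt.le) (Set.right_mem_Icc.mpr hslt.le) hslt
  linarith

theorem cbf_finite_time_achievement (h : ℝ → ℝ) (hdiff : Differentiable ℝ h)
    (ε : ℝ) (hε : 0 < ε)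
    (hineq : ∀ t : ℝ, 0 ≤ t → h t < 0 → ε ≤ deriv h t) :
    (∀ t : ℝ, max 0 (-(h 0) / ε) ≤ t → 0 ≤ h t) ∧
      (∀ t₀ t : ℝ, 0 ≤ t₀ → t₀ ≤ t → 0 ≤ h t₀ → 0 ≤ h t) := by
  have up := cbf_upward h hdiff ε hε hineq
  refine ⟨?_, up⟩
  intro t ht
  set T : ℝ := max 0 (-(h 0) / ε) with hT
  have hT0 : 0 ≤ T := le_max_left _ _
  have ht0 : 0 ≤ t := le_trans hT0 ht
  rcases le_or_gt 0 (h 0) with h0 | h0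
  · exact up 0 t le_rfl ht0 h0
  · -- h 0 < 0, so T = -(h 0)/ε
    have hTeq : T = -(h 0) / ε := by
      rw [hT, max_eq_right]
      exact div_nonneg (by linarith) hε.le
    have hhT : 0 ≤ h T := by
      by_contra hc
      push_neg at hc
      have hallneg : ∀ u, 0 ≤ u → u ≤ T → h u < 0 := by
        intro u hu1 hu2
        by_contra hc2
        push_neg at hc2
        exact absurd (up u T hu1 hu2 hc2) (not_le.mpr hc)
      set g : ℝ → ℝ := fun u => h u - ε * u with hg
      have hgderiv : ∀ u, HasDerivAt g (deriv h u - ε) u := by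
        intro u
        have h1 : HasDerivAt h (deriv h u) u := (hdiff u).hasDerivAt
        have h2 : HasDerivAt (fun u : ℝ => ε * u) (ε * 1) u :=
          (hasDerivAt_id u).const_mul ε
        have h3 := h1.sub h2
        rw [mul_one] at h3
        exact h3
      have hgmono : MonotoneOn g (Set.Icc 0 T) := by
        apply monotoneOn_of_deriv_nonneg (convex_Icc 0 T)
          ((hdiff.continuous.sub (continuous_const.mul continuous_id)).continuousOn)
        · intro u hu
          exact ((hgderiv u).differentiableAt).differentiableWithinAt
        · intro u hu
          rw [interior_Icc] at hu
          have hd : deriv (fun x => h x - ε * id x) u = deriv h u - ε := by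
            simpa using (hgderiv u).deriv
          rw [show deriv (h - (fun x => ε) * id) u = deriv h u - ε from hd]
          have := hineq u hu.1.le (hallneg u hu.1.le hu.2.le)
          linarith
      have := hgmono (Set.left_mem_Icc.mpr hT0) (Set.right_mem_Icc.mpr hT0) hT0
      simp only [hg] at this
      have hεT : ε * T = -(h 0) := by
        rw [hTeq]; field_simp
      nlinarith
    exact up T t hT0 ht hhT
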